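/- Let k be an algebraically closed field of characteristic different from 2 and 3, and let a, b ∈ k with a·b·(4a+27b) ≠ 0. Define φ : E₁(k) → E₂(k) on E₁ : y² = x³ + a(x−b)² and E₂ : y² = x³ − 3a(x − (4a+27b)/9)² by φ(O) = O, φ(x, y) = O if x = 0, and φ(x, y) = (φ_x(x), φ_y(x)·y) if x ≠ 0, where φ_x(x) = (3x³+4ax²−12abx+12ab²)/(3x²) and φ_y(x) = −(x³+4abx−8ab²)/x³. Then φ is surjective, and the set {P ∈ E₁(k) : φ(P) = O} consists of exactly the three points O, (0, β), (0, −β), where β ∈ k satisfies β² = ab²; in particular this kernel has exactly 3 elements. -/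

import Mathlib

open WeierstrassCurve.Affine Polynomial

private lemma point_ext' {k : Type*} [Field k] (W : WeierstrassCurve.Affine k) {x₁ y₁ x₂ y₂ : k}
    (h₁ : W.Nonsingular x₁ y₁) (h₂ : W.Nonsingular x₂ y₂) (hx : x₁ = x₂) (hy : y₁ = y₂) :
    Point.some _ _ h₁ = Point.some _ _ h₂ := by subst hx hy; rfl


/-- Over an algebraically closed field of characteristic not 2, 3, the 3-isogeny
`φ : E₁(k) → E₂(k)` with `E₁ : y² = x³ + a(x-b)²`, `E₂ : y² = x³ - 3a(x - (4a+27b)/9)²`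
is surjective, and its kernel consists of exactly the three points `O`, `(0, β)`, `(0, -β)`
where `β² = ab²`; in particular the kernel has exactly 3 elements. -/
theorem three_isogeny_surjective_kernel {k : Type*} [Field k] [IsAlgClosed k]
    (h2 : (2 : k) ≠ 0) (h3 : (3 : k) ≠ 0)
    (a b : k) (hab : a * b * (4 * a + 27 * b) ≠ 0)
    (a' b' : k) (ha' : a' = -3 * a) (hb' : b' = (4 * a + 27 * b) / 9)
    (W₁ W₂ : WeierstrassCurve.Affine k)
    (hW₁ : W₁ = { a₁ := 0, a₂ := a, a₃ := 0, a₄ := -2 * a * b, a₆ := a * b ^ 2 })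
    (hW₂ : W₂ = { a₁ := 0, a₂ := a', a₃ := 0, a₄ := -2 * a' * b', a₆ := a' * b' ^ 2 })
    (φ : W₁.Point → W₂.Point)
    (hφ0 : φ 0 = 0)
    (hφ : ∀ (x y : k) (h : W₁.Nonsingular x y),
      (x = 0 → φ (WeierstrassCurve.Affine.Point.some _ _ h) = 0) ∧
      (x ≠ 0 → ∃ h' : W₂.Nonsingular
          ((3 * x ^ 3 + 4 * a * x ^ 2 - 12 * a * b * x + 12 * a * b ^ 2) / (3 * x ^ 2))
          (-((x ^ 3 + 4 * a * b * x - 8 * a * b ^ 2) / x ^ 3) * y),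
        φ (WeierstrassCurve.Affine.Point.some _ _ h) = WeierstrassCurve.Affine.Point.some _ _ h')) :
    Function.Surjective φ ∧
    (∀ β : k, β ^ 2 = a * b ^ 2 →
      {P : W₁.Point | φ P = 0} =
        {P : W₁.Point | P = 0 ∨
          (∃ h : W₁.Nonsingular 0 β, P = WeierstrassCurve.Affine.Point.some _ _ h) ∨
          (∃ h : W₁.Nonsingular 0 (-β), P = WeierstrassCurve.Affine.Point.some _ _ h)}) ∧
    {P : W₁.Point | φ P = 0}.ncard = 3 := by
  have ha : a ≠ 0 := fun h => hab (by rw [h]; ring)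
  have hb : b ≠ 0 := fun h => hab (by rw [h]; ring)
  have hs : 4 * a + 27 * b ≠ 0 := fun h => hab (by rw [h]; ring)
  have h4 : (4 : k) ≠ 0 := by
    have := mul_ne_zero h2 h2; norm_num at this ⊢; exact this
  have h16 : (16 : k) ≠ 0 := by
    have := mul_ne_zero h4 h4; norm_num at this ⊢; exact this
  have h12 : (12 : k) ≠ 0 := by
    have := mul_ne_zero h4 h3; norm_num at this ⊢; exact this
  -- equation characterizations
  have hEq₁ : ∀ x y : k, W₁.Equation x y ↔
      y ^ 2 = x ^ 3 + a * x ^ 2 - 2 * a * b * x + a * b ^ 2 := by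
    intro x y
    rw [hW₁, equation_iff]
    constructor <;> intro h <;> linear_combination h
  have hEq₂ : ∀ x y : k, W₂.Equation x y ↔
      y ^ 2 = x ^ 3 + a' * x ^ 2 - 2 * a' * b' * x + a' * b' ^ 2 := by
    intro x y
    rw [hW₂, equation_iff]
    constructor <;> intro h <;> linear_combination h
  have hΔ : W₁.Δ ≠ 0 := by
    have : W₁.Δ = -16 * a ^ 2 * b ^ 3 * (4 * a + 27 * b) := by
      rw [hW₁]
      simp [WeierstrassCurve.Δ, WeierstrassCurve.b₂, WeierstrassCurve.b₄,
        WeierstrassCurve.b₆, WeierstrassCurve.b₈]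
      ring
    rw [this]
    exact mul_ne_zero (mul_ne_zero (mul_ne_zero (neg_ne_zero.mpr h16)
      (pow_ne_zero _ ha)) (pow_ne_zero _ hb)) hs
  -- the kernel description
  have hker : ∀ β : k, β ^ 2 = a * b ^ 2 →
      {P : W₁.Point | φ P = 0} =
        {P : W₁.Point | P = 0 ∨
          (∃ h : W₁.Nonsingular 0 β, P = WeierstrassCurve.Affine.Point.some _ _ h) ∨
          (∃ h : W₁.Nonsingular 0 (-β), P = WeierstrassCurve.Affine.Point.some _ _ h)} := by
    intro β hβ
    ext P
    simp only [Set.mem_setOf_eq]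
    constructor
    · intro hP
      cases P with
      | zero => exact Or.inl rfl
      | some _ _ h =>
        rename_i x y
        by_cases hx : x = 0
        · subst hx
          have hy2 : y ^ 2 = a * b ^ 2 := by
            have := (hEq₁ 0 y).mp h.1
            linear_combination this
          have : (y - β) * (y + β) = 0 := by linear_combination hy2 - hβ
          rcases mul_eq_zero.mp this with hy | hy
          · have hy : y = β := by linear_combination hy
            subst hy
            exact Or.inr (Or.inl ⟨h, rfl⟩)
          · have hy : y = -β := by linear_combination hy
            subst hy
            exact Or.inr (Or.inr ⟨h, rfl⟩)
        · obtain ⟨h', heq⟩ := (hφ x y h).2 hx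
          rw [heq] at hP
          exact absurd hP (Point.some_ne_zero h')
    · rintro (rfl | ⟨h, rfl⟩ | ⟨h, rfl⟩)
      · exact hφ0
      · exact (hφ 0 β h).1 rfl
      · exact (hφ 0 (-β) h).1 rfl
  refine ⟨?_, hker, ?_⟩
  · -- surjectivity
    intro Q
    cases Q with
    | zero => exact ⟨0, hφ0⟩
    | some _ _ hQ =>
      rename_i u v
      -- find a root of the cubic 3x³+(4a-3u)x²-12abx+12ab²
      obtain ⟨x₀, hx₀⟩ := IsAlgClosed.exists_root
        (C 3 * X ^ 3 + C (4 * a - 3 * u) * X ^ 2 + C (-(12 * a * b)) * X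
          + C (12 * a * b ^ 2) : k[X])
        (by rw [Polynomial.degree_cubic h3]; norm_num)
      have hroot : 3 * x₀ ^ 3 + (4 * a - 3 * u) * x₀ ^ 2 - 12 * a * b * x₀
          + 12 * a * b ^ 2 = 0 := by
        have := hx₀
        simp only [IsRoot, eval_add, eval_mul, eval_pow, eval_C, eval_X] at this
        linear_combination this
      have hx0 : x₀ ≠ 0 := by
        intro h0
        rw [h0] at hroot
        apply mul_ne_zero (mul_ne_zero h12 ha) (pow_ne_zero 2 hb)
        linear_combination hroot
      have hu : (3 * x₀ ^ 3 + 4 * a * x₀ ^ 2 - 12 * a * b * x₀ + 12 * a * b ^ 2)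
          / (3 * x₀ ^ 2) = u := by
        field_simp
        linear_combination hroot
      obtain ⟨y₀, hy₀⟩ := IsAlgClosed.exists_pow_nat_eq
        (x₀ ^ 3 + a * x₀ ^ 2 - 2 * a * b * x₀ + a * b ^ 2) (n := 2) two_pos
      have h₁ : W₁.Nonsingular x₀ y₀ :=
        (W₁.equation_iff_nonsingular_of_Δ_ne_zero hΔ).mp ((hEq₁ x₀ y₀).mpr hy₀)
      obtain ⟨h', heq⟩ := (hφ x₀ y₀ h₁).2 hx0
      set c : k := -((x₀ ^ 3 + 4 * a * b * x₀ - 8 * a * b ^ 2) / x₀ ^ 3) with hc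
      have hw2 : (c * y₀) ^ 2 = v ^ 2 := by
        have e1 := (hEq₂ _ _).mp h'.1
        have e2 := (hEq₂ u v).mp hQ.1
        rw [hu] at e1
        rw [e1, e2]
      have : (c * y₀ - v) * (c * y₀ + v) = 0 := by linear_combination hw2
      rcases mul_eq_zero.mp this with hv | hv
      · exact ⟨Point.some _ _ h₁, heq.trans (point_ext' W₂ h' hQ hu (by linear_combination hv))⟩
      · have h₂ : W₁.Nonsingular x₀ (-y₀) :=
          (W₁.equation_iff_nonsingular_of_Δ_ne_zero hΔ).mp ((hEq₁ x₀ (-y₀)).mpr (by rw [neg_pow]; simpa using hy₀))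
        obtain ⟨h'', heq'⟩ := (hφ x₀ (-y₀) h₂).2 hx0
        exact ⟨Point.some _ _ h₂, heq'.trans (point_ext' W₂ h'' hQ hu (by linear_combination -hv))⟩
  · -- cardinality
    obtain ⟨β, hβ⟩ := IsAlgClosed.exists_pow_nat_eq (a * b ^ 2) (n := 2) two_pos
    have hβ0 : β ≠ 0 := by
      intro h0
      rw [h0] at hβ
      exact mul_ne_zero ha (pow_ne_zero 2 hb) (by linear_combination -hβ)
    have hβne : β ≠ -β := fun h => h2 <| by
      have : 2 * β = 0 := by linear_combination h
      exact (mul_eq_zero.mp this).resolve_right hβ0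
    have hE : W₁.Nonsingular 0 β :=
      (W₁.equation_iff_nonsingular_of_Δ_ne_zero hΔ).mp ((hEq₁ 0 β).mpr (by linear_combination hβ))
    have hE' : W₁.Nonsingular 0 (-β) :=
      (W₁.equation_iff_nonsingular_of_Δ_ne_zero hΔ).mp ((hEq₁ 0 (-β)).mpr (by linear_combination hβ))
    have hset : {P : W₁.Point | φ P = 0}
        = {(0 : W₁.Point), Point.some _ _ hE, Point.some _ _ hE'} := by
      rw [hker β hβ]
      ext P
      simp only [Set.mem_setOf_eq, Set.mem_insert_iff, Set.mem_singleton_iff]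
      constructor
      · rintro (h | ⟨h, rfl⟩ | ⟨h, rfl⟩)
        · exact Or.inl h
        · exact Or.inr (Or.inl rfl)
        · exact Or.inr (Or.inr rfl)
      · rintro (h | rfl | rfl)
        · exact Or.inl h
        · exact Or.inr (Or.inl ⟨hE, rfl⟩)
        · exact Or.inr (Or.inr ⟨hE', rfl⟩)
    rw [hset]
    have hne1 : (0 : W₁.Point) ≠ Point.some _ _ hE := (Point.some_ne_zero hE).symm
    have hne2 : (0 : W₁.Point) ≠ Point.some _ _ hE' := (Point.some_ne_zero hE').symm
    have hne3 : (Point.some _ _ hE : W₁.Point) ≠ Point.some _ _ hE' := by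
      intro h
      apply hβne
      injection h with h1 h2
      try exact h2
    rw [Set.ncard_insert_of_notMem (by simp [hne1, hne2]),
      Set.ncard_pair hne3]
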